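/- Let G be a finite connected undirected weighted graph on N vertices with graph Laplacian Δ, eigenvalues 0 = λ_0 < λ_1 ≤ … ≤ λ_{N−1}, orthonormal eigenvectors φ_0, …, φ_{N−1}, Hermitian graph wavelets ψ_{t,x}, Maximum Diffusion Time MDT(x) = ∫_0^∞ ‖ψ_{t,x}‖² dt, and Information Centrality IC(x) = ( Σ_{k=1}^{N−1} |φ_k(x)|²/λ_k + (1/N) Σ_{y∈V} Σ_{k=1}^{N−1} |φ_k(y)|²/λ_k )^{−1}. Then the set of vertices minimizing MDT equals the set of vertices maximizing IC; that is, {x ∈ V : ∀ y ∈ V, MDT(x) ≤ MDT(y)} = {x ∈ V : ∀ y ∈ V, IC(y) ≤ IC(x)}. -/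

import Mathlib

open Finset MeasureTheory

/-- The Hermitian graph wavelet `ψ_{t,x}(y) = ∑_{k=1}^{N-1} t λ_k e^{-t λ_k} φ_k(x) φ_k(y)`. -/
noncomputable def hermPsi {N : ℕ} (lam : Fin N → ℝ) (φ : Fin N → Fin N → ℝ)
    (t : ℝ) (x y : Fin N) : ℝ :=
  ∑ k ∈ Finset.univ.filter (fun k : Fin N => (k : ℕ) ≠ 0),
    t * lam k * Real.exp (-(t * lam k)) * φ k x * φ k y

/-- The squared norm `‖ψ_{t,x}‖² = ∑_{y} ψ_{t,x}(y)²`. -/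
noncomputable def waveNormSq {N : ℕ} (lam : Fin N → ℝ) (φ : Fin N → Fin N → ℝ)
    (t : ℝ) (x : Fin N) : ℝ :=
  ∑ y, (hermPsi lam φ t x y) ^ 2

/-- The Maximum (Mean) Diffusion Time `MDT(x) = ∫_0^∞ ‖ψ_{t,x}‖² dt`. -/
noncomputable def MDT {N : ℕ} (lam : Fin N → ℝ) (φ : Fin N → Fin N → ℝ) (x : Fin N) : ℝ :=
  ∫ t in Set.Ioi (0:ℝ), waveNormSq lam φ t x

/-- Information Centrality
`IC(x) = (∑_{k=1}^{N-1} |φ_k(x)|²/λ_k + (1/N) ∑_y ∑_{k=1}^{N-1} |φ_k(y)|²/λ_k)⁻¹`. -/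
noncomputable def infoCentrality {N : ℕ} (lam : Fin N → ℝ) (φ : Fin N → Fin N → ℝ)
    (x : Fin N) : ℝ :=
  (∑ k ∈ Finset.univ.filter (fun k : Fin N => (k : ℕ) ≠ 0), φ k x ^ 2 / lam k
    + (1 / (N : ℝ)) * ∑ y, ∑ k ∈ Finset.univ.filter (fun k : Fin N => (k : ℕ) ≠ 0),
        φ k y ^ 2 / lam k)⁻¹

lemma eq_aux {l : ℝ} (c t : ℝ) :
    (t * l * Real.exp (-(t * l)) * c) ^ 2 = l ^ 2 * c ^ 2 * (t ^ 2 * Real.exp (-(2 * l) * t)) := by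
  rw [show (-(2*l)*t) = -(t*l) + -(t*l) by ring, Real.exp_add]; ring

lemma integ_aux {l : ℝ} (hl : 0 < l) (c : ℝ) :
    IntegrableOn (fun t : ℝ => (t * l * Real.exp (-(t * l)) * c) ^ 2) (Set.Ioi 0) := by
  have h := integrableOn_rpow_mul_exp_neg_mul_rpow (s := 2) (p := 1) (b := 2 * l)
    (by norm_num) (by norm_num) (by linarith)
  have h2 : IntegrableOn (fun x : ℝ =>
      l ^ 2 * c ^ 2 * (x ^ (2:ℝ) * Real.exp (-(2 * l) * x ^ (1:ℝ)))) (Set.Ioi 0) :=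
    h.const_mul _
  refine h2.congr_fun (fun t ht => ?_) measurableSet_Ioi
  beta_reduce
  rw [Real.rpow_one, Real.rpow_two]
  exact (eq_aux c t).symm

lemma hGamma3 : Real.Gamma 3 = 2 := by
  have h := Real.Gamma_nat_eq_factorial 2
  norm_num at h
  convert h using 2 <;> norm_num

lemma integral_aux {l : ℝ} (hl : 0 < l) (c : ℝ) :
    ∫ t in Set.Ioi (0:ℝ), (t * l * Real.exp (-(t * l)) * c) ^ 2 = c ^ 2 / (4 * l) := by
  have key : ∫ t in Set.Ioi (0:ℝ), t ^ ((3:ℝ) - 1) * Real.exp (-(2 * l * t))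
      = (1 / (2 * l)) ^ (3:ℝ) * Real.Gamma 3 :=
    Real.integral_rpow_mul_exp_neg_mul_Ioi (by norm_num) (by linarith)
  simp_rw [eq_aux c]
  rw [MeasureTheory.integral_const_mul]
  have h1 : ∀ t : ℝ, t ^ ((3:ℝ) - 1) = t ^ 2 := by
    intro t
    rw [show (3:ℝ) - 1 = ((2:ℕ):ℝ) by norm_num, Real.rpow_natCast]
  simp_rw [h1, show ∀ t:ℝ, -(2 * l * t) = -(2*l)*t from fun t => by ring] at key
  rw [key, hGamma3, show (3:ℝ) = ((3:ℕ):ℝ) by norm_num, Real.rpow_natCast]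
  field_simp
  ring

lemma expand_aux {N : ℕ} (φ : Fin N → Fin N → ℝ)
    (horth : ∀ j k, (∑ y, φ j y * φ k y) = if j = k then (1:ℝ) else 0)
    (K : Finset (Fin N)) (a : Fin N → ℝ) :
    ∑ y, (∑ k ∈ K, a k * φ k y) ^ 2 = ∑ k ∈ K, (a k) ^ 2 := by
  simp_rw [sq, Finset.sum_mul_sum]
  rw [Finset.sum_comm]
  calc ∑ j ∈ K, ∑ y : Fin N, ∑ k ∈ K, a j * φ j y * (a k * φ k y)
      = ∑ j ∈ K, ∑ k ∈ K, a j * a k * ∑ y : Fin N, φ j y * φ k y := by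
        refine Finset.sum_congr rfl fun j _ => ?_
        rw [Finset.sum_comm]
        refine Finset.sum_congr rfl fun k _ => ?_
        rw [Finset.mul_sum]
        exact Finset.sum_congr rfl fun y _ => by ring
    _ = ∑ j ∈ K, a j * a j := by
        refine Finset.sum_congr rfl fun j hj => ?_
        rw [Finset.sum_eq_single j]
        · rw [horth]; simp
        · intro k _ hkj; rw [horth, if_neg (Ne.symm hkj), mul_zero]
        · intro h; exact absurd hj h

theorem argmin_MDT_eq_argmax_IC
    (N : ℕ) (hN : 1 < N)
    (w : Fin N → Fin N → ℝ)
    (hw_symm : ∀ x y, w x y = w y x)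
    (hw_nonneg : ∀ x y, 0 ≤ w x y)
    (hw_diag : ∀ x, w x x = 0)
    (Δ : Matrix (Fin N) (Fin N) ℝ)
    (hΔ : ∀ x y, Δ x y = (if x = y then ∑ z, w x z else 0) - w x y)
    (lam : Fin N → ℝ) (φ : Fin N → Fin N → ℝ)
    (hmono : Monotone lam)
    (heig : ∀ k, Δ.mulVec (φ k) = lam k • φ k)
    (horth : ∀ j k, (∑ y, φ j y * φ k y) = if j = k then (1:ℝ) else 0)
    (hlam0 : lam ⟨0, by omega⟩ = 0)
    (hconn : 0 < lam ⟨1, hN⟩) :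
    {x : Fin N | ∀ y : Fin N, MDT lam φ x ≤ MDT lam φ y}
      = {x : Fin N | ∀ y : Fin N, infoCentrality lam φ y ≤ infoCentrality lam φ x} := by
  set K := Finset.univ.filter (fun k : Fin N => (k : ℕ) ≠ 0) with hK
  have hpos : ∀ k ∈ K, 0 < lam k := by
    intro k hk
    rw [hK, Finset.mem_filter] at hk
    have h1 : (⟨1, hN⟩ : Fin N) ≤ k := by
      rw [Fin.le_def]; simp only []
      omega
    exact lt_of_lt_of_le hconn (hmono h1)
  set S : Fin N → ℝ := fun x => ∑ k ∈ K, φ k x ^ 2 / lam k with hS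
  have hMDT : ∀ x, MDT lam φ x = (1/4) * S x := by
    intro x
    have hwave : ∀ t : ℝ, waveNormSq lam φ t x
        = ∑ k ∈ K, (t * lam k * Real.exp (-(t * lam k)) * φ k x) ^ 2 := by
      intro t
      rw [waveNormSq]
      exact expand_aux φ horth K (fun k => t * lam k * Real.exp (-(t * lam k)) * φ k x)
    rw [MDT]
    rw [MeasureTheory.setIntegral_congr_fun measurableSet_Ioi (fun t _ => hwave t)]
    rw [MeasureTheory.integral_finset_sum K (fun k hk => integ_aux (hpos k hk) (φ k x))]
    rw [hS]
    rw [Finset.mul_sum]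
    refine Finset.sum_congr rfl fun k hk => ?_
    rw [integral_aux (hpos k hk) (φ k x)]
    field_simp
  set C : ℝ := (1 / (N : ℝ)) * ∑ y, S y with hC
  have hIC : ∀ x, infoCentrality lam φ x = (S x + C)⁻¹ := fun x => rfl
  have hSnonneg : ∀ x, 0 ≤ S x := by
    intro x
    exact Finset.sum_nonneg fun k hk => div_nonneg (sq_nonneg _) (hpos k hk).le
  have hCpos : 0 < C := by
    rw [hC]
    have h1 : ∀ y : Fin N, S y = ∑ k ∈ K, φ k y ^ 2 / lam k := fun y => rfl
    have hyS : ∑ y, S y = ∑ k ∈ K, 1 / lam k := by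
      simp_rw [h1]
      rw [Finset.sum_comm]
      refine Finset.sum_congr rfl fun k _ => ?_
      rw [← Finset.sum_div]
      congr 1
      have h2 : ∑ y, φ k y * φ k y = 1 := by rw [horth, if_pos rfl]
      rw [← h2]
      exact Finset.sum_congr rfl fun y _ => (sq (φ k y))
    rw [hyS]
    have hmem : (⟨1, hN⟩ : Fin N) ∈ K := by
      rw [hK, Finset.mem_filter]
      exact ⟨Finset.mem_univ _, by simp⟩
    have : 0 < ∑ k ∈ K, 1 / lam k :=
      Finset.sum_pos' (fun k hk => (one_div_pos.mpr (hpos k hk)).le)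
        ⟨_, hmem, one_div_pos.mpr (hpos _ hmem)⟩
    positivity
  ext x
  simp only [Set.mem_setOf_eq]
  constructor
  · intro h y
    rw [hIC, hIC]
    have hxy : S x ≤ S y := by
      have := h y
      rw [hMDT, hMDT] at this
      linarith
    exact inv_anti₀ (by linarith [hSnonneg x]) (by linarith)
  · intro h y
    have := h y
    rw [hIC, hIC] at this
    have hxy : S x ≤ S y := by
      have h2 := (inv_le_inv₀ (by linarith [hSnonneg y]) (by linarith [hSnonneg x])).mp this
      linarith
    rw [hMDT, hMDT]
    linarith
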